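/- Let M be a symmetric positive definite (N−1)×(N−1) matrix with eigendecomposition M = E D Eᵀ where E is orthogonal and D = diag(d₁,…,d_{N−1}) with d_i > 0. For κ real and a given matrix F, suppose (d_i/d_j + d_j/d_i + 2) + κ(d_i + d_j) ≠ 0 for all i,j. Then the matrix equation M^{−1}UM + 2U + MUM^{−1} + κ(MU + UM) = F has the unique solution U = E V Eᵀ where V_{ij} = (EᵀFE)_{ij} / ((d_i/d_j + d_j/d_i + 2) + κ(d_i + d_j)). -/

import Mathlib

open Matrix

/-- For a symmetric positive definite matrix `M = E D Eᵀ` (with `E` orthogonal and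
`D = diag(d)`, `d i > 0`), if all denominators `(d_i/d_j + d_j/d_i + 2) + κ(d_i + d_j)`
are nonzero, then the matrix equation
`M⁻¹UM + 2U + MUM⁻¹ + κ(MU + UM) = F` has the unique solution `U = E V Eᵀ` with
`V_{ij} = (EᵀFE)_{ij} / ((d_i/d_j + d_j/d_i + 2) + κ(d_i + d_j))`. -/
theorem auxiliary_problem_unique_solution (N : ℕ)
    (E D M F : Matrix (Fin (N - 1)) (Fin (N - 1)) ℝ) (d : Fin (N - 1) → ℝ) (κ : ℝ)
    (hE : Eᵀ * E = 1) (hD : D = Matrix.diagonal d) (hd : ∀ i, 0 < d i)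
    (hM : M = E * D * Eᵀ)
    (hden : ∀ i j, (d i / d j + d j / d i + 2) + κ * (d i + d j) ≠ 0) :
    ∀ V : Matrix (Fin (N - 1)) (Fin (N - 1)) ℝ,
      (V = Matrix.of fun i j =>
        (Eᵀ * F * E) i j / ((d i / d j + d j / d i + 2) + κ * (d i + d j))) →
      (M⁻¹ * (E * V * Eᵀ) * M + 2 • (E * V * Eᵀ) + M * (E * V * Eᵀ) * M⁻¹ +
          κ • (M * (E * V * Eᵀ) + (E * V * Eᵀ) * M) = F) ∧
      ∀ U : Matrix (Fin (N - 1)) (Fin (N - 1)) ℝ,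
        M⁻¹ * U * M + 2 • U + M * U * M⁻¹ + κ • (M * U + U * M) = F →
        U = E * V * Eᵀ := by
  have hE' : E * Eᵀ = 1 := mul_eq_one_comm.mp hE
  have hdne : ∀ i, d i ≠ 0 := fun i => (hd i).ne'
  set c : Fin (N - 1) → Fin (N - 1) → ℝ :=
    fun i j => (d i / d j + d j / d i + 2) + κ * (d i + d j) with hc
  have conj_mul : ∀ A B : Matrix (Fin (N - 1)) (Fin (N - 1)) ℝ,
      (E * A * Eᵀ) * (E * B * Eᵀ) = E * (A * B) * Eᵀ := by
    intro A B
    calc (E * A * Eᵀ) * (E * B * Eᵀ) = E * (A * ((Eᵀ * E) * (B * Eᵀ))) := by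
          simp only [Matrix.mul_assoc]
      _ = E * (A * B) * Eᵀ := by rw [hE]; simp only [Matrix.one_mul, Matrix.mul_assoc]
  have hMinv : M⁻¹ = E * Matrix.diagonal (fun i => (d i)⁻¹) * Eᵀ := by
    refine Matrix.inv_eq_right_inv ?_
    rw [hM, hD, conj_mul, Matrix.diagonal_mul_diagonal]
    have h1 : (fun i => d i * (d i)⁻¹) = fun _ => (1 : ℝ) := by
      funext i; exact mul_inv_cancel₀ (hdne i)
    rw [h1, Matrix.diagonal_one, Matrix.mul_one, hE']
  have key : ∀ W : Matrix (Fin (N - 1)) (Fin (N - 1)) ℝ,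
      M⁻¹ * (E * W * Eᵀ) * M + 2 • (E * W * Eᵀ) + M * (E * W * Eᵀ) * M⁻¹ +
        κ • (M * (E * W * Eᵀ) + (E * W * Eᵀ) * M)
      = E * (Matrix.of fun i j => c i j * W i j) * Eᵀ := by
    intro W
    rw [hMinv, hM, hD]
    simp only [conj_mul]
    have h2 : 2 • (E * W * Eᵀ) = E * ((2:ℝ) • W) * Eᵀ := by
      rw [Matrix.mul_smul, Matrix.smul_mul, ← Nat.cast_smul_eq_nsmul ℝ]
      norm_num
    have hκ : ∀ X Y : Matrix (Fin (N - 1)) (Fin (N - 1)) ℝ,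
        κ • (E * X * Eᵀ + E * Y * Eᵀ) = E * (κ • (X + Y)) * Eᵀ := by
      intro X Y
      rw [Matrix.mul_smul, Matrix.smul_mul, Matrix.mul_add, Matrix.add_mul]
    rw [h2, hκ, ← Matrix.add_mul, ← Matrix.add_mul, ← Matrix.add_mul,
      ← Matrix.mul_add, ← Matrix.mul_add, ← Matrix.mul_add]
    congr 2
    ext i j
    simp only [Matrix.add_apply, Matrix.smul_apply, Matrix.mul_diagonal,
      Matrix.diagonal_mul, Matrix.of_apply, smul_eq_mul, hc]
    field_simp [hdne i, hdne j]
    ring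
  intro V hV
  have hVentry : ∀ i j, c i j * V i j = (Eᵀ * F * E) i j := by
    intro i j
    rw [hV]
    simp only [Matrix.of_apply]
    rw [mul_comm, div_mul_cancel₀ _ (hden i j)]
  have hEFE : E * (Eᵀ * F * E) * Eᵀ = F := by
    calc E * (Eᵀ * F * E) * Eᵀ = (E * Eᵀ) * (F * (E * Eᵀ)) := by
          simp only [Matrix.mul_assoc]
      _ = F := by rw [hE', Matrix.one_mul, Matrix.mul_one]
  constructor
  · rw [key V]
    have h3 : (Matrix.of fun i j => c i j * V i j) = Eᵀ * F * E := by
      ext i j; exact hVentry i j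
    rw [h3, hEFE]
  · intro U hU
    have hUeq : U = E * (Eᵀ * U * E) * Eᵀ := by
      calc U = (E * Eᵀ) * (U * (E * Eᵀ)) := by
            rw [hE', Matrix.one_mul, Matrix.mul_one]
        _ = E * (Eᵀ * U * E) * Eᵀ := by simp only [Matrix.mul_assoc]
    set W := Eᵀ * U * E with hW
    rw [hUeq] at hU
    rw [key W] at hU
    have hZ : (Matrix.of fun i j => c i j * W i j) = Eᵀ * F * E := by
      calc (Matrix.of fun i j => c i j * W i j)
          = (Eᵀ * E) * ((Matrix.of fun i j => c i j * W i j) * (Eᵀ * E)) := by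
            rw [hE, Matrix.one_mul, Matrix.mul_one]
        _ = Eᵀ * ((E * (Matrix.of fun i j => c i j * W i j) * Eᵀ) * E) := by
            simp only [Matrix.mul_assoc]
        _ = Eᵀ * F * E := by rw [hU, Matrix.mul_assoc]
    have hWV : W = V := by
      ext i j
      have h1 : c i j * W i j = (Eᵀ * F * E) i j := by
        have h2 := congrArg (fun X => X i j) hZ
        simpa using h2
      rw [hV]
      simp only [Matrix.of_apply]
      rw [eq_div_iff (hden i j), mul_comm]
      exact h1
    rw [hUeq, hWV]
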